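/- Let ν be a Borel probability measure on [0,∞) all of whose moments ∫ v^k dν(v), k ∈ ℕ, are finite, and let σ_μ be the mixture of semicircle laws defined by σ_μ(A) := ∫ σ_v(A) dν(v). Then σ_μ is a semicircle distribution, i.e. σ_μ = σ_s for some s ∈ [0,∞), if and only if there exists a ∈ [0,∞) such that ν = δ_a. -/

import Mathlib

open MeasureTheory ProbabilityTheory Filter Topology
open scoped ENNReal NNReal

noncomputable section

/-- The semicircle distribution `σ_v`: for `v ≠ 0` it has Lebesgue density
`(2πv)⁻¹ √(max (4v - x²) 0)`; `σ_0 := δ_0`. -/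
def semicircle (v : ℝ) : Measure ℝ :=
  if v = 0 then Measure.dirac 0
  else MeasureTheory.volume.withDensity fun x =>
    ENNReal.ofReal ((2 * Real.pi * v)⁻¹ * Real.sqrt (max (4 * v - x ^ 2) 0))

namespace Stmt16Aux

open Real intervalIntegral

lemma integral_J : ∫ x in (-1:ℝ)..1, x ^ 2 * √(1 - x ^ 2) = Real.pi / 8 := by
  calc ∫ x in (-1:ℝ)..1, x ^ 2 * √(1 - x ^ 2)
      = ∫ x in Real.sin (-(Real.pi/2)).. Real.sin (Real.pi/2), x ^ 2 * √(1 - x ^ 2) := by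
        rw [Real.sin_neg, Real.sin_pi_div_two]
    _ = ∫ x in (-(Real.pi/2))..(Real.pi/2), (Real.sin x ^ 2 * √(1 - Real.sin x ^ 2)) * Real.cos x :=
        (integral_comp_mul_deriv (fun x _ => Real.hasDerivAt_sin x) Real.continuousOn_cos
          (by fun_prop)).symm
    _ = ∫ x in (-(Real.pi/2))..(Real.pi/2), Real.sin x ^ 2 * Real.cos x ^ 2 := by
        refine integral_congr_ae (MeasureTheory.ae_of_all _ fun x h => ?_)
        rw [Set.uIoc_of_le (by linarith [Real.pi_pos] : -(Real.pi/2) ≤ Real.pi/2),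
          Set.mem_Ioc] at h
        rw [← Real.cos_eq_sqrt_one_sub_sin_sq h.1.le h.2]
        ring
    _ = Real.pi / 8 := by
        rw [integral_sin_sq_mul_cos_sq]
        have h1 : 4 * (Real.pi / 2) = 2 * Real.pi := by ring
        rw [h1]
        have h2 : 4 * (-(Real.pi / 2)) = -(2 * Real.pi) := by ring
        rw [h2]
        simp [Real.sin_two_pi]

lemma integral_scaled (v : ℝ) (hv : 0 < v) :
    ∫ x in (-(2*Real.sqrt v))..(2*Real.sqrt v), x ^ 2 * √(4*v - x ^ 2) = 2*Real.pi*v^2 := by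
  have hr : (0:ℝ) < 2 * Real.sqrt v := by positivity
  have key := mul_integral_comp_mul_left (a := (-1:ℝ)) (b := 1) (c := 2*Real.sqrt v)
    (f := fun y => y ^ 2 * √(4*v - y ^ 2))
  have hsq : (2*Real.sqrt v) ^ 2 = 4 * v := by
    rw [mul_pow, Real.sq_sqrt hv.le]; ring
  have hh : ∀ x : ℝ, (2*Real.sqrt v * x) ^ 2 * √(4*v - (2*Real.sqrt v * x) ^ 2)
      = (4*v*(2*Real.sqrt v)) * (x ^ 2 * √(1 - x ^ 2)) := by
    intro x
    have h5 : 4*v - (2*Real.sqrt v * x) ^ 2 = (4*v) * (1 - x ^ 2) := by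
      rw [mul_pow, hsq]; ring
    rw [h5, Real.sqrt_mul (by positivity), mul_pow, hsq]
    have h4 : Real.sqrt (4*v) = 2 * Real.sqrt v := by
      rw [show (4:ℝ)*v = (2*Real.sqrt v)^2 by rw [hsq], Real.sqrt_sq hr.le]
    rw [h4]; ring
  simp only [hh] at key
  rw [intervalIntegral.integral_const_mul] at key
  rw [show (2*Real.sqrt v) * (-1 : ℝ) = -(2*Real.sqrt v) by ring, mul_one] at key
  rw [← key, integral_J]
  linear_combination (2*Real.pi*v) * Real.mul_self_sqrt hv.le

lemma measurable_semicircle : Measurable semicircle := by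
  apply Measure.measurable_of_measurable_coe
  intro s hs
  simp only [semicircle, apply_ite (fun μ : Measure ℝ => μ s)]
  have hset : MeasurableSet {v : ℝ | v = 0} := by
    simp only [Set.setOf_eq_eq_singleton]
    exact measurableSet_singleton 0
  refine Measurable.ite hset measurable_const ?_
  simp_rw [withDensity_apply _ hs]
  exact Measurable.lintegral_prod_right'
    (f := fun p : ℝ × ℝ =>
      ENNReal.ofReal ((2 * Real.pi * p.1)⁻¹ * Real.sqrt (max (4 * p.1 - p.2 ^ 2) 0)))
    (by fun_prop)

lemma semicircle_lintegral_sq (v : ℝ) (hv : 0 ≤ v) :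
    ∫⁻ x, ENNReal.ofReal (x ^ 2) ∂(semicircle v) = ENNReal.ofReal v := by
  rcases eq_or_lt_of_le hv with h | h
  · rw [semicircle, if_pos h.symm, lintegral_dirac' _ (by fun_prop), ← h]
    norm_num
  · rw [semicircle, if_neg h.ne']
    set r : ℝ := 2 * Real.sqrt v with hrdef
    have hr : (0:ℝ) < r := by positivity
    have hrsq : r ^ 2 = 4 * v := by rw [hrdef, mul_pow, Real.sq_sqrt h.le]; ring
    set G : ℝ → ℝ := fun x => (2 * Real.pi * v)⁻¹ * Real.sqrt (max (4 * v - x ^ 2) 0) * x ^ 2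
      with hGdef
    have hGnn : ∀ x, 0 ≤ G x := fun x => by positivity
    have hGc : Continuous G := by fun_prop
    have hGzero : ∀ x : ℝ, x ∉ Set.Ioo (-r) r → G x = 0 := by
      intro x hx
      have hle : 4 * v - x ^ 2 ≤ 0 := by
        rw [Set.mem_Ioo, not_and_or, not_lt, not_lt] at hx
        rcases hx with hx | hx
        · nlinarith
        · nlinarith
      simp [hGdef, max_eq_right hle]
    have hGsupp : HasCompactSupport G :=
      HasCompactSupport.intro isCompact_Icc
        (fun x hx => hGzero x (fun hx' => hx (Set.Ioo_subset_Icc_self hx')))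
    have hGint : Integrable G := hGc.integrable_of_hasCompactSupport hGsupp
    rw [lintegral_withDensity_eq_lintegral_mul _ (by fun_prop) (by fun_prop)]
    have hmul : ∀ x : ℝ,
        (ENNReal.ofReal ((2 * Real.pi * v)⁻¹ * Real.sqrt (max (4 * v - x ^ 2) 0)) *
          ENNReal.ofReal (x ^ 2)) = ENNReal.ofReal (G x) := by
      intro x
      rw [hGdef, ← ENNReal.ofReal_mul (by positivity)]
    calc ∫⁻ x, ((fun x => ENNReal.ofReal ((2 * Real.pi * v)⁻¹ *
            Real.sqrt (max (4 * v - x ^ 2) 0))) * fun x => ENNReal.ofReal (x ^ 2)) x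
        = ∫⁻ x, ENNReal.ofReal (G x) := by
          refine lintegral_congr fun x => ?_
          simp only [Pi.mul_apply]
          exact hmul x
      _ = ENNReal.ofReal (∫ x, G x) :=
          (ofReal_integral_eq_lintegral_ofReal hGint (ae_of_all _ hGnn)).symm
      _ = ENNReal.ofReal v := by
          congr 1
          have h1 : ∫ x, G x = ∫ x in Set.Ioc (-r) r, G x :=
            (setIntegral_eq_integral_of_forall_compl_eq_zero
              (fun x hx => hGzero x (fun hx' => hx (Set.Ioo_subset_Ioc_self hx')))).symm
          have h2 : ∫ x in Set.Ioc (-r) r, G x = ∫ x in (-r)..r, G x :=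
            (intervalIntegral.integral_of_le (by linarith)).symm
          have h3 : ∫ x in (-r)..r, G x
              = ∫ x in (-r)..r, (2 * Real.pi * v)⁻¹ * (x ^ 2 * √(4 * v - x ^ 2)) := by
            refine intervalIntegral.integral_congr fun x hx => ?_
            rw [Set.uIcc_of_le (by linarith : -r ≤ r), Set.mem_Icc] at hx
            have hmx : max (4 * v - x ^ 2) 0 = 4 * v - x ^ 2 := by
              apply max_eq_left; nlinarith [hx.1, hx.2]
            rw [hGdef]; dsimp only; rw [hmx]; ring
          rw [h1, h2, h3, intervalIntegral.integral_const_mul, integral_scaled v h]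
          have hπ := Real.pi_pos.ne'
          field_simp


lemma semicircle_tail_zero (s : ℝ) (hs : 0 ≤ s) :
    semicircle s (Set.Ioi (2 * Real.sqrt s)) = 0 := by
  rcases eq_or_lt_of_le hs with h | h
  · rw [semicircle, if_pos h.symm, Measure.dirac_apply' _ measurableSet_Ioi]
    rw [← h]
    simp
  · rw [semicircle, if_neg h.ne', withDensity_apply _ measurableSet_Ioi]
    rw [setLIntegral_congr_fun measurableSet_Ioi (fun x hx => ?_), lintegral_zero]
    have hx' : 2 * Real.sqrt s < x := hx
    have hle : 4 * s - x ^ 2 ≤ 0 := by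
      nlinarith [Real.mul_self_sqrt hs, Real.sqrt_nonneg s]
    simp [max_eq_right hle]

lemma semicircle_tail_pos (s v : ℝ) (hs : 0 ≤ s) (hv : s < v) :
    semicircle v (Set.Ioi (2 * Real.sqrt s)) ≠ 0 := by
  have hv0 : 0 < v := lt_of_le_of_lt hs hv
  set c : ℝ := 2 * Real.sqrt s with hc
  set rr : ℝ := 2 * Real.sqrt v with hrr
  have hcr : c < rr := by
    have := Real.sqrt_lt_sqrt hs hv
    rw [hc, hrr]; linarith
  set b : ℝ := (c + rr) / 2 with hb
  have hc0 : (0:ℝ) ≤ c := by positivity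
  have hcb : c < b := by rw [hb]; linarith
  have hbr : b < rr := by rw [hb]; linarith
  have hb0 : (0:ℝ) ≤ b := by linarith
  have hb4v : b ^ 2 < 4 * v := by
    have hrr2 : rr ^ 2 = 4 * v := by
      rw [hrr, mul_pow, Real.sq_sqrt hv0.le]; ring
    nlinarith
  set ε : ℝ≥0∞ := ENNReal.ofReal ((2 * Real.pi * v)⁻¹ * Real.sqrt (4 * v - b ^ 2)) with hε
  have hεpos : 0 < ε := by
    rw [hε]
    apply ENNReal.ofReal_pos.mpr
    have h1 : 0 < Real.sqrt (4 * v - b ^ 2) := Real.sqrt_pos.mpr (by linarith)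
    have h2 : 0 < (2 * Real.pi * v)⁻¹ := by
      have := Real.pi_pos; positivity
    positivity
  rw [semicircle, if_neg hv0.ne', withDensity_apply _ measurableSet_Ioi]
  intro h0
  have hle : ε * volume (Set.Ioo c b) ≤
      ∫⁻ x in Set.Ioi c, ENNReal.ofReal ((2 * Real.pi * v)⁻¹ * Real.sqrt (max (4 * v - x ^ 2) 0)) := by
    calc ε * volume (Set.Ioo c b) = ∫⁻ _ in Set.Ioo c b, ε := (setLIntegral_const _ _).symm
      _ ≤ ∫⁻ x in Set.Ioo c b,
            ENNReal.ofReal ((2 * Real.pi * v)⁻¹ * Real.sqrt (max (4 * v - x ^ 2) 0)) := by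
          refine setLIntegral_mono' measurableSet_Ioo fun x hx => ?_
          rw [hε]
          apply ENNReal.ofReal_le_ofReal
          apply mul_le_mul_of_nonneg_left _ (by positivity)
          apply Real.sqrt_le_sqrt
          rw [Set.mem_Ioo] at hx
          have : x ^ 2 ≤ b ^ 2 := by nlinarith [hx.1, hx.2]
          exact le_max_of_le_left (by linarith)
      _ ≤ _ := lintegral_mono_set Set.Ioo_subset_Ioi_self
  rw [h0] at hle
  have hvol : volume (Set.Ioo c b) = ENNReal.ofReal (b - c) := by
    rw [Real.volume_Ioo]
  have : ε * volume (Set.Ioo c b) = 0 := le_antisymm hle zero_le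
  rcases mul_eq_zero.mp this with h | h
  · exact hεpos.ne' h
  · rw [hvol] at h
    rw [ENNReal.ofReal_eq_zero] at h
    linarith

end Stmt16Aux

/-- A mixture `σ_μ = ∫ σ_v dν(v)` of semicircle laws (with `ν` a Borel
probability measure on `[0,∞)` having finite moments of all orders) is itself a semicircle
distribution if and only if `ν` is a Dirac measure `δ_a` for some `a ∈ [0,∞)`. -/
theorem stmt16 (ν : Measure ℝ) [IsProbabilityMeasure ν] (hν : ν (Set.Iio 0) = 0)
    (hmom : ∀ k : ℕ, Integrable (fun v => v ^ k) ν) :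
    (∃ s : ℝ, 0 ≤ s ∧ ν.bind semicircle = semicircle s) ↔
      (∃ a : ℝ, 0 ≤ a ∧ ν = Measure.dirac a) := by
  have hsc := Stmt16Aux.measurable_semicircle
  constructor
  · rintro ⟨s, hs, hbind⟩
    have hae0 : ∀ᵐ v ∂ν, 0 ≤ v := by
      rw [ae_iff]
      have hset : {v : ℝ | ¬ 0 ≤ v} = Set.Iio 0 := by ext v; simp [not_le]
      rw [hset]; exact hν
    have hνIoi : ν (Set.Ioi s) = 0 := by
      have h1 : (ν.bind semicircle) (Set.Ioi (2 * Real.sqrt s)) = 0 := by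
        rw [hbind]; exact Stmt16Aux.semicircle_tail_zero s hs
      rw [Measure.bind_apply measurableSet_Ioi hsc.aemeasurable] at h1
      have h2 := (lintegral_eq_zero_iff
        ((Measure.measurable_coe measurableSet_Ioi).comp hsc)).mp h1
      rw [Filter.EventuallyEq, ae_iff] at h2
      refine measure_mono_null (fun v hv => ?_) h2
      exact fun h => Stmt16Aux.semicircle_tail_pos s v hs hv h
    have haele : ∀ᵐ v ∂ν, v ≤ s := by
      rw [ae_iff]
      refine measure_mono_null (fun v hv => ?_) hνIoi
      simpa using not_le.mp hv
    have hmean : ∫⁻ v, ENNReal.ofReal v ∂ν = ENNReal.ofReal s := by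
      have h2 : ∫⁻ x, ENNReal.ofReal (x ^ 2) ∂(ν.bind semicircle) = ENNReal.ofReal s := by
        rw [hbind]; exact Stmt16Aux.semicircle_lintegral_sq s hs
      rw [Measure.lintegral_bind hsc.aemeasurable (by fun_prop : Measurable fun x : ℝ => ENNReal.ofReal (x ^ 2)).aemeasurable] at h2
      rw [← h2]
      refine lintegral_congr_ae ?_
      filter_upwards [hae0] with v hv
      rw [Stmt16Aux.semicircle_lintegral_sq v hv]
    have haes : ∀ᵐ v ∂ν, v = s := by
      have hsub : ∫⁻ v, (ENNReal.ofReal s - ENNReal.ofReal v) ∂ν = 0 := by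
        rw [lintegral_sub (by fun_prop) (by rw [hmean]; exact ENNReal.ofReal_ne_top)
          (by filter_upwards [haele] with v hv; exact ENNReal.ofReal_le_ofReal hv)]
        rw [hmean, lintegral_const, measure_univ, mul_one, tsub_self]
      have h3 := (lintegral_eq_zero_iff (by fun_prop)).mp hsub
      filter_upwards [haele, hae0, h3] with v h1 h2 h4
      simp only [Pi.zero_apply] at h4
      have h5 : ENNReal.ofReal s ≤ ENNReal.ofReal v := tsub_eq_zero_iff_le.mp h4
      have h6 : s ≤ v := (ENNReal.ofReal_le_ofReal_iff h2).mp h5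
      linarith
    refine ⟨s, hs, ?_⟩
    have hcompl : ν {s}ᶜ = 0 := by
      rw [ae_iff] at haes
      refine measure_mono_null (fun v hv => ?_) haes
      exact hv
    ext A hA
    rw [Measure.dirac_apply' _ hA]
    by_cases hsA : s ∈ A
    · have hup : ν Set.univ ≤ ν A + ν {s}ᶜ := by
        refine le_trans (measure_mono fun x _ => ?_) (measure_union_le _ _)
        by_cases hx : x = s
        · exact Or.inl (hx ▸ hsA)
        · exact Or.inr hx
      rw [hcompl, add_zero, measure_univ] at hup
      rw [Set.indicator_of_mem hsA]
      exact le_antisymm prob_le_one hup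
    · rw [Set.indicator_of_notMem hsA]
      refine measure_mono_null (fun x hx => ?_) hcompl
      exact fun hxs => hsA (hxs ▸ hx)
  · rintro ⟨a, ha, rfl⟩
    exact ⟨a, ha, Measure.dirac_bind hsc a⟩
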